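/- For any configuration c of unlabeled chips on Z, there exists a unique stable configuration d reachable from c by a sequence of firings. -/

import Mathlib

/-- `c'` is obtained from `c` by firing at vertex `j`. -/
def FireAt (c : ℤ → ℕ) (j : ℤ) (c' : ℤ → ℕ) : Prop :=
  2 ≤ c j ∧ c' (j - 1) = c (j - 1) + 1 ∧ c' (j + 1) = c (j + 1) + 1 ∧ c' j = c j - 2 ∧
    ∀ i : ℤ, i ≠ j - 1 → i ≠ j → i ≠ j + 1 → c' i = c i

/-- a single chip-firing move -/
def Step (c c' : ℤ → ℕ) : Prop := ∃ j, FireAt c j c'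

/-- reachability by a (possibly empty) sequence of firings -/
def Reaches : (ℤ → ℕ) → (ℤ → ℕ) → Prop := Relation.ReflTransGen Step

/-- a configuration is stable if no vertex has two chips -/
def Stable (c : ℤ → ℕ) : Prop := ∀ i : ℤ, c i ≤ 1

lemma fireAt_iff {c c' : ℤ → ℕ} {j : ℤ} :
    FireAt c j c' ↔ 2 ≤ c j ∧ ∀ i : ℤ, c' i + (if i = j then 2 else 0)
      = c i + (if i = j - 1 then 1 else 0) + (if i = j + 1 then 1 else 0) := by
  unfold FireAt
  constructor
  · rintro ⟨h2, ha, hb, hj, ho⟩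
    refine ⟨h2, fun i => ?_⟩
    rcases eq_or_ne i (j - 1) with rfl | h1
    · split_ifs <;> omega
    · rcases eq_or_ne i j with rfl | h2'
      · split_ifs <;> omega
      · rcases eq_or_ne i (j + 1) with rfl | h3
        · split_ifs <;> omega
        · have := ho i h1 h2' h3
          split_ifs <;> omega
  · rintro ⟨h2, he⟩
    refine ⟨h2, ?_, ?_, ?_, fun i h1 h2' h3 => ?_⟩
    · have := he (j - 1); split_ifs at this <;> omega
    · have := he (j + 1); split_ifs at this <;> omega
    · have := he j; split_ifs at this <;> omega
    · have := he i; split_ifs at this <;> omega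

lemma diamond {a b c : ℤ → ℕ} (hab : Step a b) (hac : Step a c) :
    ∃ d, Relation.ReflGen Step b d ∧ Relation.ReflTransGen Step c d := by
  obtain ⟨j, hj⟩ := hab; obtain ⟨k, hk⟩ := hac
  rw [fireAt_iff] at hj hk
  obtain ⟨hj2, hje⟩ := hj; obtain ⟨hk2, hke⟩ := hk
  rcases eq_or_ne j k with rfl | hjk
  · have : b = c := funext fun i => by
      have h1 := hje i; have h2 := hke i; split_ifs at h1 h2 <;> omega
    subst this
    exact ⟨b, .refl, .refl⟩
  · refine ⟨fun i => a i + (if i = j - 1 then 1 else 0) + (if i = j + 1 then 1 else 0)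
      + (if i = k - 1 then 1 else 0) + (if i = k + 1 then 1 else 0)
      - (if i = j then 2 else 0) - (if i = k then 2 else 0), ?_, ?_⟩
    · refine Relation.ReflGen.single ⟨k, fireAt_iff.mpr ⟨?_, fun i => ?_⟩⟩
      · have := hje k; split_ifs at this <;> omega
      · have h1 := hje i; have h2 := hke i
        split_ifs at h1 h2 ⊢ <;> omega
    · refine Relation.ReflTransGen.single ⟨j, fireAt_iff.mpr ⟨?_, fun i => ?_⟩⟩
      · have := hke j; split_ifs at this <;> omega
      · have h1 := hje i; have h2 := hke i
        split_ifs at h1 h2 ⊢ <;> omega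

lemma reaches_stable_eq {d e : ℤ → ℕ} (hd : Stable d) (h : Relation.ReflTransGen Step d e) :
    d = e := by
  rcases h.cases_head with rfl | ⟨e', ⟨j, hf⟩, _⟩
  · rfl
  · have := hd j
    have := hf.1
    omega

/-- adding one chip at `x` -/
def addChip (x : ℤ) (c : ℤ → ℕ) : ℤ → ℕ := fun i => c i + if i = x then 1 else 0

lemma step_addChip (x : ℤ) {c c' : ℤ → ℕ} (h : Step c c') :
    Step (addChip x c) (addChip x c') := by
  obtain ⟨j, hf⟩ := h
  rw [fireAt_iff] at hf
  obtain ⟨h2, he⟩ := hf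
  refine ⟨j, fireAt_iff.mpr ⟨?_, fun i => ?_⟩⟩
  · simp only [addChip]; split_ifs <;> omega
  · have := he i
    simp only [addChip]
    split_ifs at this ⊢ <;> omega

lemma reaches_addChip (x : ℤ) {c d : ℤ → ℕ} (h : Relation.ReflTransGen Step c d) :
    Relation.ReflTransGen Step (addChip x c) (addChip x d) :=
  Relation.ReflTransGen.lift (addChip x) (fun _ _ hs => step_addChip x hs) _ _ h

lemma step_support {c c' : ℤ → ℕ} (h : Step c c') (hc : (Function.support c).Finite) :
    (Function.support c').Finite := by
  obtain ⟨j, hf⟩ := h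
  rw [fireAt_iff] at hf
  obtain ⟨h2, he⟩ := hf
  refine Set.Finite.subset ((hc.insert (j - 1)).insert (j + 1)) (fun i hi => ?_)
  simp only [Function.mem_support] at hi
  simp only [Set.mem_insert_iff, Function.mem_support]
  have := he i
  split_ifs at this <;> omega

lemma reaches_support {c d : ℤ → ℕ} (h : Relation.ReflTransGen Step c d)
    (hc : (Function.support c).Finite) : (Function.support d).Finite := by
  induction h with
  | refl => exact hc
  | tail _ hstep ih => exact step_support hstep ih

/-- termination via a stabilizing bound function -/
lemma stab_of_bound : ∀ n : ℕ, ∀ c w : ℤ → ℕ, ∀ hw : (Function.support w).Finite,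
    (∑ i ∈ hw.toFinset, w i) = n →
    (∀ i, c i + w (i - 1) + w (i + 1) ≤ 1 + 2 * w i) →
    ∃ d, Reaches c d ∧ Stable d := by
  intro n
  induction n using Nat.strong_induction_on with
  | _ n ih =>
  intro c w hw hsum hb
  by_cases hst : Stable c
  · exact ⟨c, .refl, hst⟩
  · simp only [Stable, not_forall, not_le] at hst
    obtain ⟨j, hj⟩ := hst
    have hj2 : 2 ≤ c j := hj
    have hwj : 1 ≤ w j := by have := hb j; omega
    set c' : ℤ → ℕ := fun i => c i + (if i = j - 1 then 1 else 0) + (if i = j + 1 then 1 else 0)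
      - (if i = j then 2 else 0) with hc'def
    have hstep : Step c c' := by
      refine ⟨j, fireAt_iff.mpr ⟨hj2, fun i => ?_⟩⟩
      rcases eq_or_ne i j with rfl | h
      · simp only [hc'def]; split_ifs <;> omega
      · simp only [hc'def]; split_ifs <;> omega
    set w' : ℤ → ℕ := fun i => w i - (if i = j then 1 else 0) with hw'def
    have hsup' : Function.support w' ⊆ Function.support w := fun i hi => by
      simp only [Function.mem_support, hw'def] at hi ⊢
      split_ifs at hi <;> omega
    have hw' := hw.subset hsup'
    have hjs : j ∈ hw.toFinset := hw.mem_toFinset.mpr (by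
      simp only [Function.mem_support]; omega)
    have hsum' : ∑ i ∈ hw'.toFinset, w' i = n - 1 := by
      have hsubs : hw'.toFinset ⊆ hw.toFinset := by
        intro y hy
        exact hw.mem_toFinset.mpr (hsup' (hw'.mem_toFinset.mp hy))
      have e1 : ∑ i ∈ hw'.toFinset, w' i = ∑ i ∈ hw.toFinset, w' i :=
        Finset.sum_subset hsubs (fun y _ hy => by
          by_contra h
          exact hy (hw'.mem_toFinset.mpr h))
      have e2 := Finset.add_sum_erase hw.toFinset w hjs
      have e3 := Finset.add_sum_erase hw.toFinset w' hjs
      have e4 : ∑ i ∈ hw.toFinset.erase j, w' i = ∑ i ∈ hw.toFinset.erase j, w i :=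
        Finset.sum_congr rfl (fun y hy => by
          have hyj := (Finset.mem_erase.mp hy).1
          simp only [hw'def]
          split_ifs <;> omega)
      have e5 : w' j = w j - 1 := by simp [hw'def]
      omega
    have hn1 : 1 ≤ n := by
      have := Finset.single_le_sum (f := w) (fun i _ => Nat.zero_le _) hjs
      omega
    have hb' : ∀ i, c' i + w' (i - 1) + w' (i + 1) ≤ 1 + 2 * w' i := by
      intro i
      rcases eq_or_ne i j with rfl | hij
      · have := hb i
        simp only [hc'def, hw'def]
        split_ifs <;> omega
      · rcases eq_or_ne i (j - 1) with rfl | h1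
        · have := hb (j - 1)
          have hlink : 1 ≤ w (j - 1 + 1) := by
            rwa [show (j : ℤ) - 1 + 1 = j by ring]
          simp only [hc'def, hw'def]
          split_ifs <;> omega
        · rcases eq_or_ne i (j + 1) with rfl | h2
          · have := hb (j + 1)
            have hlink : 1 ≤ w (j + 1 - 1) := by
              rwa [show (j : ℤ) + 1 - 1 = j by ring]
            simp only [hc'def, hw'def]
            split_ifs <;> omega
          · have := hb i
            simp only [hc'def, hw'def]
            split_ifs <;> omega
    obtain ⟨d, hd, hds⟩ := ih (n - 1) (by omega) c' w' hw' hsum' hb'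
    exact ⟨d, Relation.ReflTransGen.head hstep hd, hds⟩

lemma exists_stab : ∀ n : ℕ, ∀ c : ℤ → ℕ, ∀ hc : (Function.support c).Finite,
    (∑ i ∈ hc.toFinset, c i = n) → ∃ d, Reaches c d ∧ Stable d := by
  intro n
  induction n using Nat.strong_induction_on with
  | _ n ih =>
  intro c hc hsum
  rcases Nat.eq_zero_or_pos n with rfl | hn
  · refine ⟨c, .refl, fun i => ?_⟩
    by_cases h : c i = 0
    · omega
    · have hmem : i ∈ hc.toFinset := hc.mem_toFinset.mpr h
      have := Finset.single_le_sum (f := c) (fun i _ => Nat.zero_le _) hmem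
      omega
  · have hex : ∃ x ∈ hc.toFinset, c x ≠ 0 := by
      by_contra hall
      push_neg at hall
      have : ∑ i ∈ hc.toFinset, c i = 0 := Finset.sum_eq_zero hall
      omega
    obtain ⟨x, hxs, hx⟩ := hex
    set c' : ℤ → ℕ := fun i => c i - (if i = x then 1 else 0) with hc'def
    have hsup' : Function.support c' ⊆ Function.support c := fun i hi => by
      simp only [Function.mem_support, hc'def] at hi ⊢
      split_ifs at hi <;> omega
    have hc' := hc.subset hsup'
    have hsum' : ∑ i ∈ hc'.toFinset, c' i = n - 1 := by
      have hsubs : hc'.toFinset ⊆ hc.toFinset := by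
        intro y hy
        exact hc.mem_toFinset.mpr (hsup' (hc'.mem_toFinset.mp hy))
      have e1 : ∑ i ∈ hc'.toFinset, c' i = ∑ i ∈ hc.toFinset, c' i :=
        Finset.sum_subset hsubs (fun y _ hy => by
          by_contra h
          exact hy (hc'.mem_toFinset.mpr h))
      have e2 := Finset.add_sum_erase hc.toFinset c hxs
      have e3 := Finset.add_sum_erase hc.toFinset c' hxs
      have e4 : ∑ i ∈ hc.toFinset.erase x, c' i = ∑ i ∈ hc.toFinset.erase x, c i :=
        Finset.sum_congr rfl (fun y hy => by
          have hyx := (Finset.mem_erase.mp hy).1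
          simp only [hc'def]
          split_ifs <;> omega)
      have e5 : c' x = c x - 1 := by simp [hc'def]
      omega
    obtain ⟨s, hrs, hss⟩ := ih (n - 1) (by omega) c' hc' hsum'
    have hsfin := reaches_support hrs hc'
    have hcs : addChip x c' = c := funext fun i => by
      rcases eq_or_ne i x with rfl | h
      · simp only [addChip, hc'def]
        split_ifs <;> omega
      · simp only [addChip, hc'def]
        split_ifs <;> omega
    have hr2 : Reaches c (addChip x s) := by
      have := reaches_addChip x hrs
      rwa [hcs] at this
    set H : ℕ := 1 + hsfin.toFinset.sup (fun i => (i - x).natAbs) with hH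
    have hs0 : ∀ i, H ≤ (i - x).natAbs → s i = 0 := by
      intro i h
      by_contra hne
      have hmem : i ∈ hsfin.toFinset := hsfin.mem_toFinset.mpr hne
      have := Finset.le_sup (f := fun i => (i - x).natAbs) hmem
      omega
    set w : ℤ → ℕ := fun i => H - (i - x).natAbs with hwdef
    have hwfin : (Function.support w).Finite :=
      Set.Finite.subset (Set.finite_Icc (x - H) (x + H)) (fun i hi => by
        simp only [Function.mem_support, hwdef] at hi
        simp only [Set.mem_Icc]
        omega)
    have hbound : ∀ i, addChip x s i + w (i - 1) + w (i + 1) ≤ 1 + 2 * w i := by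
      intro i
      have h1 : s i ≤ 1 := hss i
      by_cases hfar : H ≤ (i - x).natAbs
      · have h0 := hs0 i hfar
        simp only [addChip, hwdef]
        split_ifs <;> omega
      · simp only [addChip, hwdef]
        split_ifs <;> omega
    obtain ⟨d, hrd, hsd⟩ := stab_of_bound (∑ i ∈ hwfin.toFinset, w i) (addChip x s) w hwfin rfl
      hbound
    exact ⟨d, hr2.trans hrd, hsd⟩

theorem stmt_6 (c : ℤ → ℕ) (hc : (Function.support c).Finite) :
    ∃! d : ℤ → ℕ, Reaches c d ∧ Stable d := by
  obtain ⟨d, hrd, hsd⟩ := exists_stab (∑ i ∈ hc.toFinset, c i) c hc rfl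
  refine ⟨d, ⟨hrd, hsd⟩, ?_⟩
  rintro d' ⟨hrd', hsd'⟩
  obtain ⟨e, h1, h2⟩ := Relation.church_rosser
    (fun a b c hab hac => diamond hab hac) hrd' hrd
  exact (reaches_stable_eq hsd' h1).trans (reaches_stable_eq hsd h2).symm
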